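/- Assumption 4 can fail in the full-rank Cholesky family even for a strongly convex ℓ. Concretely, let d = 2, A = [[1, −2], [−2, 5]] (a positive-definite symmetric matrix, so ℓ(z) = (1/2) zᵀ A z is strongly convex), C = [[1, 0], [1, 1]], and m = 0. If the coordinates u_1, u_2 of u are independent with E[u_i] = 0 and E[u_i²] = 1, then E[g_1(λ; u) · u_1] = E[(A C u)_1 · u_1] = −1 < 0, where g(λ; u) = (∇ℓ)(C u + m). -/

import Mathlib

open MeasureTheory ProbabilityTheory Matrix

noncomputable section

abbrev Euc (d : ℕ) := EuclideanSpace ℝ (Fin d)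

/-- The quadratic function `ℓ(z) = (1/2) zᵀ A z`. -/
def quadForm {d : ℕ} (A : Matrix (Fin d) (Fin d) ℝ) : Euc d → ℝ :=
  fun z => (1 / 2) * ∑ i, ∑ j, z i * A i j * z j

lemma grad_quad (z : Euc 2) :
    HasGradientAt (quadForm !![1,-2;-2,5])
      (WithLp.toLp 2 (fun i => (!![1,-2;-2,5] : Matrix (Fin 2) (Fin 2) ℝ).mulVec z i) : Euc 2) z := by
  rw [hasGradientAt_iff_hasFDerivAt]
  set P0 : Euc 2 →L[ℝ] ℝ := EuclideanSpace.proj 0 with hP0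
  set P1 : Euc 2 →L[ℝ] ℝ := EuclideanSpace.proj 1 with hP1
  have h0 : HasFDerivAt (fun z : Euc 2 => z 0) P0 z := P0.hasFDerivAt
  have h1 : HasFDerivAt (fun z : Euc 2 => z 1) P1 z := P1.hasFDerivAt
  have H : HasFDerivAt (fun z : Euc 2 => (1/2 : ℝ) * (z 0 * z 0) + (-2 : ℝ) * (z 0 * z 1)
      + (5/2 : ℝ) * (z 1 * z 1))
      ((1/2 : ℝ) • (z 0 • P0 + z 0 • P0) + (-2 : ℝ) • (z 0 • P1 + z 1 • P0)
        + (5/2 : ℝ) • (z 1 • P1 + z 1 • P1)) z :=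
    (((h0.mul h0).const_mul _).add ((h0.mul h1).const_mul _)).add ((h1.mul h1).const_mul _)
  have hfun : quadForm (!![1,-2;-2,5] : Matrix (Fin 2) (Fin 2) ℝ)
      = fun z : Euc 2 => (1/2 : ℝ) * (z 0 * z 0) + (-2 : ℝ) * (z 0 * z 1)
        + (5/2 : ℝ) * (z 1 * z 1) := by
    funext z
    simp [quadForm, Fin.sum_univ_two]
    ring
  rw [hfun]
  refine H.congr_fderiv ?_
  ext h
  simp [InnerProductSpace.toDual_apply_apply, PiLp.inner_apply, Fin.sum_univ_two, mulVec,
    dotProduct, hP0, hP1]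
  ring

/-- Assumption 4 can fail in the full-rank Cholesky family even for a
strongly convex `ℓ`.  With `d = 2`, `A = [[1,−2],[−2,5]]` (positive definite and
symmetric, so `ℓ(z) = (1/2) zᵀ A z` is strongly convex), `C = [[1,0],[1,1]]` and
`m = 0`, if `u₁, u₂` are independent with mean `0` and second moment `1`, then
`E[g₁(λ;u) · u₁] = E[(A C u)₁ · u₁] = −1 < 0`, where `g(λ;u) = ∇ℓ(C u + m)`. -/
theorem assumption_four_counterexample
    {Ω : Type*} [MeasurableSpace Ω] (μ : Measure Ω) [IsProbabilityMeasure μ]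
    (u : Ω → Fin 2 → ℝ)
    (hmeas : ∀ i, Measurable fun ω => u ω i)
    (hindep : IndepFun (fun ω => u ω 0) (fun ω => u ω 1) μ)
    (hmean : ∀ i, ∫ ω, u ω i ∂μ = 0)
    (hvar : ∀ i, ∫ ω, (u ω i) ^ 2 ∂μ = 1)
    (hint1 : ∀ i, Integrable (fun ω => u ω i) μ)
    (hint2 : ∀ i j, Integrable (fun ω => u ω i * u ω j) μ)
    (A C : Matrix (Fin 2) (Fin 2) ℝ)
    (hA : A = !![1, -2; -2, 5]) (hC : C = !![1, 0; 1, 1])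
    (m : Euc 2) (hm : m = 0) :
    (Matrix.PosDef A ∧ A.IsSymm) ∧
    (∫ ω, gradient (quadForm A) (WithLp.toLp 2 (fun i => C.mulVec (u ω) i + m i) : Euc 2) 0 * u ω 0 ∂μ)
      = ∫ ω, (A * C).mulVec (u ω) 0 * u ω 0 ∂μ ∧
    (∫ ω, gradient (quadForm A) (WithLp.toLp 2 (fun i => C.mulVec (u ω) i + m i) : Euc 2) 0 * u ω 0 ∂μ)
      = -1 ∧
    (∫ ω, gradient (quadForm A) (WithLp.toLp 2 (fun i => C.mulVec (u ω) i + m i) : Euc 2) 0 * u ω 0 ∂μ)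
      < 0 := by
  subst hA hC hm
  -- pointwise computation of the gradient integrand
  have hw : ∀ ω, (WithLp.toLp 2 (fun i => (!![1, 0; 1, 1] : Matrix (Fin 2) (Fin 2) ℝ).mulVec (u ω) i
      + (0 : Euc 2) i) : Euc 2)
      = (WithLp.toLp 2 (fun i => (!![1, 0; 1, 1] : Matrix (Fin 2) (Fin 2) ℝ).mulVec (u ω) i) : Euc 2) := by
    intro ω; congr 1; funext i; simp
  have hgrad : ∀ ω, gradient (quadForm !![1,-2;-2,5])
      (WithLp.toLp 2 (fun i => (!![1, 0; 1, 1] : Matrix (Fin 2) (Fin 2) ℝ).mulVec (u ω) i + (0 : Euc 2) i) : Euc 2) 0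
      = -(u ω 0) - 2 * u ω 1 := by
    intro ω
    rw [hw ω, (grad_quad _).gradient]
    simp [mulVec, dotProduct, Fin.sum_univ_two]
    ring
  have hAC : ∀ ω, ((!![1,-2;-2,5] : Matrix (Fin 2) (Fin 2) ℝ) * !![1, 0; 1, 1]).mulVec (u ω) 0
      = -(u ω 0) - 2 * u ω 1 := by
    intro ω
    simp [mulVec, dotProduct, Fin.sum_univ_two, Matrix.mul_apply]
    ring
  have hcov : ∫ ω, u ω 0 * u ω 1 ∂μ = 0 := by
    have := hindep.integral_mul_eq_mul_integral (hint1 0).aestronglyMeasurable (hint1 1).aestronglyMeasurable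
    simpa [hmean 0, Pi.mul_apply] using this
  have key : ∫ ω, (-(u ω 0) - 2 * u ω 1) * u ω 0 ∂μ = -1 := by
    have heq : (fun ω => (-(u ω 0) - 2 * u ω 1) * u ω 0)
        = fun ω => (-1 : ℝ) * (u ω 0 * u ω 0) + (-2 : ℝ) * (u ω 0 * u ω 1) := by
      funext ω; ring
    rw [heq, integral_add ((hint2 0 0).const_mul _) ((hint2 0 1).const_mul _),
      integral_const_mul, integral_const_mul, hcov]
    have h00 : ∫ ω, u ω 0 * u ω 0 ∂μ = 1 := by
      have := hvar 0; simpa [pow_two] using this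
    rw [h00]; ring
  have hPD : Matrix.PosDef (!![1,-2;-2,5] : Matrix (Fin 2) (Fin 2) ℝ) := by
    rw [Matrix.posDef_iff_dotProduct_mulVec]
    constructor
    · ext i j; fin_cases i <;> fin_cases j <;> simp [Matrix.conjTranspose_apply]
    · intro x hx
      have hx' : x 0 ≠ 0 ∨ x 1 ≠ 0 := by
        by_contra h
        push_neg at h
        exact hx (funext fun i => by fin_cases i <;> simp [h.1, h.2])
      have : star x ⬝ᵥ (!![1,-2;-2,5] : Matrix (Fin 2) (Fin 2) ℝ) *ᵥ x
          = (x 0 - 2 * x 1)^2 + (x 1)^2 := by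
        simp [dotProduct, mulVec, Fin.sum_univ_two]
        ring
      rw [this]
      rcases hx' with h | h
      · rcases eq_or_ne (x 1) 0 with h1 | h1
        · have : x 0 - 2 * x 1 ≠ 0 := by rw [h1]; simpa using h
          positivity
        · positivity
      · positivity
  refine ⟨⟨hPD, by ext i j; fin_cases i <;> fin_cases j <;> simp [Matrix.transpose_apply]⟩, ?_, ?_, ?_⟩
  · rw [integral_congr_ae (Filter.Eventually.of_forall fun ω => by rw [hgrad ω])]
    exact (integral_congr_ae (Filter.Eventually.of_forall fun ω => by rw [hAC ω])).symm
  · rw [integral_congr_ae (Filter.Eventually.of_forall fun ω => by rw [hgrad ω])]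
    exact key
  · rw [integral_congr_ae (Filter.Eventually.of_forall fun ω => by rw [hgrad ω])]
    rw [key]; norm_num


end
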